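/- Let 𝔞 be a finitely generated ideal in a commutative ring A, A_k := A/𝔞^{k+1}, and let {M_k}_{k∈ℕ} be an 𝔞-adic system of A-modules with limit M̂ := lim_{←k} M_k. Then: (1) M̂ is an 𝔞-adically complete A-module; (2) for every k ≥ 0 the canonical homomorphism A_k ⊗_A M̂ → M_k is bijective. -/

import Mathlib

/-- The inverse limit of an inverse system `{M_k}` of modules, realized as a
submodule of the product `∀ k, M k`. -/
def invLimit {A : Type*} [CommRing A] {M : ℕ → Type*}
    [∀ k, AddCommGroup (M k)] [∀ k, Module A (M k)]
    (f : ∀ k, M (k + 1) →ₗ[A] M k) : Submodule A (∀ k, M k) where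
  carrier := {x | ∀ k, f k (x (k + 1)) = x k}
  add_mem' hx hy := fun k => by simp [hx k, hy k]
  zero_mem' := fun k => by simp
  smul_mem' c x hx := fun k => by simp [hx k]

section Aux
variable {A : Type*} [CommRing A] {M : ℕ → Type*}
  [∀ k, AddCommGroup (M k)] [∀ k, Module A (M k)]

/-- Transport a module along an equality of indices, as a linear map. -/
def castLM {a b : ℕ} (h : a = b) : M a →ₗ[A] M b where
  toFun x := h ▸ x
  map_add' := by subst h; intros; rfl
  map_smul' := by subst h; intros; rfl

theorem castLM_rfl {a : ℕ} (h : a = a) (x : M a) : castLM (A := A) (M := M) h x = x := rfl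

theorem castLM_castLM {a b c : ℕ} (h : a = b) (h' : b = c) (x : M a) :
    castLM (A := A) (M := M) h' (castLM (A := A) h x) = castLM (A := A) (h.trans h') x := by
  subst h; subst h'; rfl

variable (f : ∀ k, M (k + 1) →ₗ[A] M k)

theorem f_castLM {a b : ℕ} (h : a = b) (h2 : a + 1 = b + 1) (x : M (a + 1)) :
    f b (castLM (A := A) h2 x) = castLM (A := A) h (f a x) := by subst h; rfl

/-- Composite transition map `M (i+j) → M i`. -/
def downMap (i : ℕ) : ∀ j, M (i + j) →ₗ[A] M i :=
  Nat.rec LinearMap.id (fun j g => g.comp (f (i + j)))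

theorem downMap_zero (i : ℕ) (x : M i) : downMap f i 0 x = x := rfl

theorem downMap_succ (i j : ℕ) (x : M (i + (j+1))) :
    downMap f i (j+1) x = downMap f i j (f (i + j) x) := rfl

theorem downMap_surjective (hs : ∀ k, Function.Surjective (f k)) (i : ℕ) :
    ∀ j, Function.Surjective (downMap f i j)
  | 0 => Function.surjective_id
  | j+1 => (downMap_surjective hs i j).comp (hs (i + j))

theorem down_f_comm (i : ℕ) : ∀ (j : ℕ) (h : (i+1)+j = i+(j+1)) (x : M ((i+1)+j)),
    f i (downMap f (i+1) j x) = downMap f i (j+1) (castLM (A := A) h x)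
  | 0, h, x => by
    show f i x = f i (castLM (A := A) h x)
    rw [castLM_rfl h x]
  | j+1, h, x => by
    have h1 : (i+1)+j = i+(j+1) := by omega
    show f i (downMap f (i+1) j (f ((i+1)+j) x)) = downMap f i (j+1) (f (i+(j+1)) (castLM (A := A) h x))
    rw [down_f_comm i j h1 (f ((i+1)+j) x)]
    exact congrArg (downMap f i (j+1)) (f_castLM f h1 h x).symm

/-- Upward lifting sequence through the surjections. -/
noncomputable def upSeq (hs : ∀ k, Function.Surjective (f k)) (k : ℕ) (m : M k) :
    ∀ j, M (k + j) :=
  Nat.rec m (fun j x => Function.surjInv (hs (k + j)) x)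

theorem upSeq_step (hs : ∀ k, Function.Surjective (f k)) (k : ℕ) (m : M k) (j : ℕ) :
    f (k + j) (upSeq f hs k m (j+1)) = upSeq f hs k m j :=
  Function.surjInv_eq (hs (k + j)) _

theorem down_up (hs : ∀ k, Function.Surjective (f k)) (k : ℕ) (m : M k) :
    ∀ j, downMap f k j (upSeq f hs k m j) = m
  | 0 => rfl
  | j+1 => by
    show downMap f k j (f (k + j) (upSeq f hs k m (j+1))) = m
    rw [upSeq_step f hs k m j]
    exact down_up hs k m j

/-- A global section through a point `m : M k`. -/
noncomputable def sect (hs : ∀ k, Function.Surjective (f k)) (k : ℕ) (m : M k)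
    (n : ℕ) : M n :=
  downMap f n k (castLM (A := A) (Nat.add_comm k n) (upSeq f hs k m n))

theorem sect_coherent (hs : ∀ k, Function.Surjective (f k)) (k : ℕ) (m : M k) (n : ℕ) :
    f n (sect f hs k m (n+1)) = sect f hs k m n := by
  have h1 : (n+1)+k = n+(k+1) := by omega
  have h3 : k+(n+1) = n+(k+1) := by omega
  unfold sect
  rw [down_f_comm f n k h1 _, castLM_castLM]
  show downMap f n k (f (n + k) (castLM (A := A) ((Nat.add_comm k (n+1)).trans h1) (upSeq f hs k m (n+1)))) = _
  rw [show f (n + k) (castLM (A := A) ((Nat.add_comm k (n+1)).trans h1) (upSeq f hs k m (n+1)))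
      = castLM (A := A) (Nat.add_comm k n) (f (k + n) (upSeq f hs k m (n+1))) from
    f_castLM f (Nat.add_comm k n) _ _]
  rw [upSeq_step f hs k m n]

theorem sect_eval (hs : ∀ k, Function.Surjective (f k)) (k : ℕ) (m : M k) :
    sect f hs k m k = m := by
  unfold sect
  rw [castLM_rfl]
  exact down_up f hs k m k

theorem down_mem {x : ∀ n, M n} (hx : ∀ n, f n (x (n+1)) = x n) (i : ℕ) :
    ∀ j, downMap f i j (x (i + j)) = x i
  | 0 => rfl
  | j+1 => by
    show downMap f i j (f (i + j) (x ((i+j)+1))) = x i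
    rw [hx (i+j)]
    exact down_mem hx i j

theorem down_mem_cast {x : ∀ n, M n} (hx : ∀ n, f n (x (n+1)) = x n) (i j m : ℕ)
    (h : m = i + j) : downMap f i j (castLM (A := A) h (x m)) = x i := by
  subst h
  rw [castLM_rfl]
  exact down_mem f hx i j

variable (𝔞 : Ideal A)

theorem ker_downMap (hs : ∀ k, Function.Surjective (f k))
    (hker : ∀ k, LinearMap.ker (f k) = 𝔞 ^ (k + 1) • (⊤ : Submodule A (M (k + 1))))
    (i : ℕ) : ∀ j, LinearMap.ker (downMap f i (j+1)) = 𝔞 ^ (i + 1) • (⊤ : Submodule A (M (i + (j+1))))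
  | 0 => by
    show LinearMap.ker (LinearMap.id.comp (f i)) = _
    rw [LinearMap.id_comp, hker i]
  | j+1 => by
    show LinearMap.ker ((downMap f i (j+1)).comp (f (i + (j+1)))) = _
    rw [LinearMap.ker_comp, ker_downMap hs hker i j]
    have hmap : Submodule.map (f (i + (j+1))) (𝔞 ^ (i+1) • (⊤ : Submodule A (M (i + (j+1) + 1))))
        = 𝔞 ^ (i+1) • (⊤ : Submodule A (M (i + (j+1)))) := by
      rw [Submodule.map_smul'', Submodule.map_top, LinearMap.range_eq_top.mpr (hs (i + (j+1)))]
    rw [← hmap, Submodule.comap_map_eq, hker (i + (j+1))]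
    refine sup_eq_left.mpr (Submodule.smul_mono_left ?_)
    exact Ideal.pow_le_pow_right (by omega)

theorem mem_finsetSpan_smul_iff {W : Type*} [AddCommGroup W] [Module A W]
    (S : Finset A) (P : Submodule A W) (m : W) :
    m ∈ Ideal.span (S : Set A) • P ↔
      ∃ c : A → W, (∀ a, c a ∈ P) ∧ ∑ a ∈ S, a • c a = m := by
  constructor
  · intro hm
    refine Submodule.smul_induction_on hm ?_ ?_
    · intro r hr n hn
      obtain ⟨t, -, ht⟩ := Submodule.mem_span_finset.mp hr
      refine ⟨fun a => t a • n, fun a => P.smul_mem _ hn, ?_⟩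
      calc ∑ a ∈ S, a • t a • n = (∑ a ∈ S, t a • a) • n := by
            rw [Finset.sum_smul]
            refine Finset.sum_congr rfl fun a _ => ?_
            rw [smul_eq_mul, mul_smul]
            exact smul_comm a (t a) n
        _ = r • n := by rw [ht]
    · rintro x y ⟨c1, hc1, h1⟩ ⟨c2, hc2, h2⟩
      refine ⟨fun a => c1 a + c2 a, fun a => P.add_mem (hc1 a) (hc2 a), ?_⟩
      rw [← h1, ← h2, ← Finset.sum_add_distrib]
      exact Finset.sum_congr rfl fun a _ => smul_add _ _ _
  · rintro ⟨c, hc, rfl⟩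
    exact Submodule.sum_mem _ fun a ha =>
      Submodule.smul_mem_smul (Submodule.subset_span ha) (hc a)

theorem smul_top_map {W W' : Type*} [AddCommGroup W] [Module A W] [AddCommGroup W']
    [Module A W'] (g : W →ₗ[A] W') {I : Ideal A} {m : W} (h : m ∈ I • (⊤ : Submodule A W)) :
    g m ∈ I • (⊤ : Submodule A W') := by
  have : g m ∈ Submodule.map g (I • (⊤ : Submodule A W)) := Submodule.mem_map_of_mem h
  rw [Submodule.map_smul''] at this
  exact Submodule.smul_mono le_rfl le_top this

theorem castLM_mem_smul {a b : ℕ} (h : a = b) {I : Ideal A} {m : M a}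
    (hm : m ∈ I • (⊤ : Submodule A (M a))) :
    castLM (A := A) (M := M) h m ∈ I • (⊤ : Submodule A (M b)) := by
  subst h; exact hm
end Aux

section Main
variable {A : Type*} [CommRing A] (𝔞 : Ideal A) {M : ℕ → Type*}
  [∀ k, AddCommGroup (M k)] [∀ k, Module A (M k)]
  (f : ∀ k, M (k + 1) →ₗ[A] M k)
  (hs : ∀ k, Function.Surjective (f k))
  (hker : ∀ k, LinearMap.ker (f k) = 𝔞 ^ (k + 1) • (⊤ : Submodule A (M (k + 1))))

/-- One step of the inductive choice of generator decompositions. -/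
noncomputable def Ystep (S : Finset A) (k : ℕ) (hS : Ideal.span (S : Set A) = 𝔞 ^ (k + 1))
    (x : ∀ n, M n) (hx : ∀ n, f n (x (n + 1)) = x n) (j : ℕ)
    (y : A → M (k + j)) (hy : ∑ a ∈ S, a • y a = x (k + j)) :
    {y' : A → M (k + j + 1) // (∑ a ∈ S, a • y' a = x (k + j + 1)) ∧
      ∀ a, f (k + j) (y' a) - y a ∈ 𝔞 ^ j • (⊤ : Submodule A (M (k + j)))} := by
  have hsKJ := hs (k + j)
  set ty : A → M (k + j + 1) := fun a => Function.surjInv hsKJ (y a) with hty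
  have hf : ∀ a, f (k + j) (ty a) = y a := fun a => Function.surjInv_eq hsKJ (y a)
  have hk2 : x (k + j + 1) - ∑ a ∈ S, a • ty a ∈ LinearMap.ker (f (k + j)) := by
    rw [LinearMap.mem_ker, map_sub, map_sum]
    simp only [map_smul, hf]
    rw [hx (k + j), hy, sub_self]
  rw [hker (k + j)] at hk2
  have h𝔞p : 𝔞 ^ (k + j + 1) = Ideal.span (S : Set A) * 𝔞 ^ j := by
    rw [hS, ← pow_add, show k + 1 + j = k + j + 1 by omega]
  rw [h𝔞p, mul_smul] at hk2
  have hex := (mem_finsetSpan_smul_iff S (𝔞 ^ j • (⊤ : Submodule A (M (k + j + 1)))) _).mp hk2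
  set c := Classical.choose hex with hcdef
  obtain ⟨hc, hcsum⟩ := Classical.choose_spec hex
  refine ⟨fun a => ty a + c a, ?_, ?_⟩
  · have : ∑ a ∈ S, a • (ty a + c a) = (∑ a ∈ S, a • ty a) + ∑ a ∈ S, a • c a := by
      rw [← Finset.sum_add_distrib]
      exact Finset.sum_congr rfl fun a _ => smul_add _ _ _
    rw [this, hcsum]
    abel
  · intro a
    have : f (k + j) (ty a + c a) - y a = f (k + j) (c a) := by
      rw [map_add, hf]; abel
    rw [this]
    exact Submodule.smul_mono le_rfl le_top (smul_top_map (f (k + j)) (hc a))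

/-- The inductively chosen generator decompositions at every level. -/
noncomputable def Yseq (S : Finset A) (k : ℕ) (hS : Ideal.span (S : Set A) = 𝔞 ^ (k + 1))
    (x : ∀ n, M n) (hx : ∀ n, f n (x (n + 1)) = x n) (hxk : x k = 0) :
    ∀ j, {y : A → M (k + j) // ∑ a ∈ S, a • y a = x (k + j)} :=
  Nat.rec ⟨fun _ => 0, by simp only [smul_zero, Finset.sum_const_zero]; exact hxk.symm⟩
    (fun j p => ⟨(Ystep 𝔞 f hs hker S k hS x hx j p.1 p.2).1,
      (Ystep 𝔞 f hs hker S k hS x hx j p.1 p.2).2.1⟩)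

theorem Yseq_step (S : Finset A) (k : ℕ) (hS : Ideal.span (S : Set A) = 𝔞 ^ (k + 1))
    (x : ∀ n, M n) (hx : ∀ n, f n (x (n + 1)) = x n) (hxk : x k = 0) (j : ℕ) (a : A) :
    f (k + j) ((Yseq 𝔞 f hs hker S k hS x hx hxk (j + 1)).1 a)
      - (Yseq 𝔞 f hs hker S k hS x hx hxk j).1 a ∈ 𝔞 ^ j • (⊤ : Submodule A (M (k + j))) :=
  (Ystep 𝔞 f hs hker S k hS x hx j (Yseq 𝔞 f hs hker S k hS x hx hxk j).1
    (Yseq 𝔞 f hs hker S k hS x hx hxk j).2).2.2 a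

variable [∀ k, Module (A ⧸ 𝔞 ^ (k + 1)) (M k)] [∀ k, IsScalarTower A (A ⧸ 𝔞 ^ (k + 1)) (M k)]

theorem smul_top_eq_bot (k : ℕ) : 𝔞 ^ (k + 1) • (⊤ : Submodule A (M k)) = ⊥ := by
  rw [eq_bot_iff]
  refine Submodule.smul_le.mpr fun r hr n _ => ?_
  have h1 : r • n = (algebraMap A (A ⧸ 𝔞 ^ (k + 1)) r) • n := (algebraMap_smul _ r n).symm
  rw [Submodule.mem_bot, h1, Ideal.Quotient.algebraMap_eq,
    Ideal.Quotient.eq_zero_iff_mem.mpr hr, zero_smul]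

include hs in
theorem proj_surj (k : ℕ) :
    Function.Surjective ((LinearMap.proj k).comp (invLimit f).subtype) := fun m =>
  ⟨⟨sect f hs k m, fun n => sect_coherent f hs k m n⟩, sect_eval f hs k m⟩

include hs hker in
theorem ker_proj (h𝔞 : 𝔞.FG) (k : ℕ) :
    LinearMap.ker ((LinearMap.proj k).comp (invLimit f).subtype) =
      𝔞 ^ (k + 1) • (⊤ : Submodule A (invLimit f)) := by
  apply le_antisymm
  · intro z hz
    have hx : ∀ n, f n (z.1 (n + 1)) = z.1 n := z.2
    have hzk : z.1 k = 0 := hz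
    obtain ⟨S, hS⟩ := Submodule.FG.pow h𝔞 (k + 1)
    have hS' : Ideal.span (S : Set A) = 𝔞 ^ (k + 1) := hS
    set Y := Yseq 𝔞 f hs hker S k hS' z.1 hx hzk with hYdef
    have h2 : ∀ n : ℕ, k + (n + 1) = n + (k + 1) := fun n => by omega
    set w : A → ∀ n, M n := fun a n =>
      downMap f n (k + 1) (castLM (A := A) (h2 n) ((Y (n + 1)).1 a)) with hwdef
    have hw : ∀ a n, f n (w a (n + 1)) = w a n := by
      intro a n
      have h1 : (n + 1) + (k + 1) = n + (k + 2) := by omega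
      have h3 : k + (n + 2) = n + (k + 2) := by omega
      calc f n (w a (n + 1))
          = downMap f n ((k + 1) + 1) (castLM (A := A) h3 ((Y (n + 2)).1 a)) := by
            exact (down_f_comm f n (k + 1) h1 _).trans
              (congrArg _ (castLM_castLM (h2 (n + 1)) h1 _))
        _ = downMap f n (k + 1)
              (castLM (A := A) (h2 n) (f (k + (n + 1)) ((Y (n + 2)).1 a))) :=
            by
            show downMap f n (k + 1) (f (n + (k + 1)) (castLM (A := A) h3 ((Y (n + 2)).1 a)))
              = _
            exact congrArg _ (f_castLM f (h2 n) h3 _)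
        _ = w a n := by
            set d := f (k + (n + 1)) ((Y (n + 2)).1 a) - (Y (n + 1)).1 a with hddef
            have hfd : f (k + (n + 1)) ((Y (n + 2)).1 a) = (Y (n + 1)).1 a + d := by
              rw [hddef]; abel
            rw [hfd, map_add, map_add]
            have hd0 : downMap f n (k + 1) (castLM (A := A) (h2 n) d) = 0 := by
              have hmem := smul_top_map (downMap f n (k + 1))
                (castLM_mem_smul (h2 n)
                  (Yseq_step 𝔞 f hs hker S k hS' z.1 hx hzk (n + 1) a))
              rw [smul_top_eq_bot 𝔞 n, Submodule.mem_bot] at hmem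
              exact hmem
            rw [hd0, add_zero]
    have hsum : ∀ n, ∑ a ∈ S, a • w a n = z.1 n := by
      intro n
      have step : ∑ a ∈ S, a • w a n =
          downMap f n (k + 1) (castLM (A := A) (h2 n) (∑ a ∈ S, a • (Y (n + 1)).1 a)) := by
        rw [map_sum, map_sum]
        exact Finset.sum_congr rfl fun a _ => by rw [map_smul, map_smul]
      rw [step, (Y (n + 1)).2]
      exact down_mem_cast f hx n (k + 1) (k + (n + 1)) (h2 n)
    set W : A → invLimit f := fun a => ⟨w a, hw a⟩ with hWdef
    have hWsum : ∑ a ∈ S, a • W a = z := by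
      apply Subtype.ext
      have : ((invLimit f).subtype (∑ a ∈ S, a • W a)) = ∑ a ∈ S, a • w a := by
        rw [map_sum]
        exact Finset.sum_congr rfl fun a _ => by rw [map_smul]; rfl
      show ((invLimit f).subtype (∑ a ∈ S, a • W a)) = z.1
      rw [this]
      funext n
      rw [Finset.sum_apply]
      exact hsum n
    rw [← hS']
    exact (mem_finsetSpan_smul_iff S ⊤ z).mpr ⟨W, fun a => Submodule.mem_top, hWsum⟩
  · refine Submodule.smul_le.mpr fun r hr z _ => ?_
    have : ((LinearMap.proj k).comp (invLimit f).subtype) (r • z) = r • z.1 k := rfl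
    rw [LinearMap.mem_ker, this]
    have hmem : r • z.1 k ∈ 𝔞 ^ (k + 1) • (⊤ : Submodule A (M k)) :=
      Submodule.smul_mem_smul hr Submodule.mem_top
    rwa [smul_top_eq_bot 𝔞 k, Submodule.mem_bot] at hmem

end Main


/-- Let `𝔞` be a finitely generated ideal of a commutative ring `A`, `A_k := A/𝔞^(k+1)`,
and let `{M_k}` be an `𝔞`-adic system of `A`-modules: each `M_k` is an `A_k`-module,
and each transition map `f k : M_(k+1) → M_k` induces a bijection
`A_k ⊗_{A_(k+1)} M_(k+1) → M_k`, i.e. `f k` is surjective with kernel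
`𝔞^(k+1) M_(k+1)`.  Let `M̂ := lim_k M_k`.  Then:
1. `M̂` is an `𝔞`-adically complete `A`-module;
2. for every `k` the canonical homomorphism `A_k ⊗_A M̂ → M_k` is bijective, i.e.
   the projection `M̂ → M_k` is surjective with kernel `𝔞^(k+1) M̂`. -/
theorem adic_system_limit_complete_and_base_change {A : Type*} [CommRing A]
    (𝔞 : Ideal A) (h𝔞 : 𝔞.FG) {M : ℕ → Type*}
    [∀ k, AddCommGroup (M k)] [∀ k, Module A (M k)]
    [∀ k, Module (A ⧸ 𝔞 ^ (k + 1)) (M k)]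
    [∀ k, IsScalarTower A (A ⧸ 𝔞 ^ (k + 1)) (M k)]
    (f : ∀ k, M (k + 1) →ₗ[A] M k)
    (hsys : ∀ k, Function.Surjective (f k) ∧
      LinearMap.ker (f k) = 𝔞 ^ (k + 1) • (⊤ : Submodule A (M (k + 1)))) :
    IsAdicComplete 𝔞 (invLimit f) ∧
    ∀ k : ℕ, Function.Surjective ((LinearMap.proj k).comp (invLimit f).subtype) ∧
      LinearMap.ker ((LinearMap.proj k).comp (invLimit f).subtype) =
        𝔞 ^ (k + 1) • (⊤ : Submodule A (invLimit f)) := by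
  have hsurj : ∀ k, Function.Surjective (f k) := fun k => (hsys k).1
  have hker : ∀ k, LinearMap.ker (f k) = 𝔞 ^ (k + 1) • (⊤ : Submodule A (M (k + 1))) :=
    fun k => (hsys k).2
  have hK : ∀ k, LinearMap.ker ((LinearMap.proj k).comp (invLimit f).subtype) =
      𝔞 ^ (k + 1) • (⊤ : Submodule A (invLimit f)) := ker_proj 𝔞 f hsurj hker h𝔞
  refine ⟨?_, fun k => ⟨proj_surj f hsurj k, hK k⟩⟩
  have hH : IsHausdorff 𝔞 (invLimit f) := by
    refine ⟨fun z hz => ?_⟩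
    have hcomp : ∀ n, z.1 n = 0 := by
      intro n
      have hmem : z - 0 ∈ 𝔞 ^ (n + 1) • (⊤ : Submodule A (invLimit f)) :=
        SModEq.sub_mem.mp (hz (n + 1))
      rw [sub_zero, ← hK n, LinearMap.mem_ker] at hmem
      exact hmem
    exact Subtype.ext (funext hcomp)
  have hP : IsPrecomplete 𝔞 (invLimit f) := by
    refine ⟨fun F hF => ?_⟩
    set L' : ∀ n, M n := fun n => (F (n + 1)).1 n with hL'def
    have key : ∀ m n, n + 1 ≤ m → (F m).1 n = L' n := by
      intro m n h
      have hmem : F (n + 1) - F m ∈ 𝔞 ^ (n + 1) • (⊤ : Submodule A (invLimit f)) :=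
        SModEq.sub_mem.mp (hF h)
      rw [← hK n, LinearMap.mem_ker, map_sub] at hmem
      have : (F (n + 1)).1 n - (F m).1 n = 0 := hmem
      rw [sub_eq_zero] at this
      exact this.symm
    have hcohL : ∀ n, f n (L' (n + 1)) = L' n := by
      intro n
      have h1 : L' (n + 1) = (F (n + 2)).1 (n + 1) := (key (n + 2) (n + 1) (by omega)).symm
      rw [h1]
      have h2 : f n ((F (n + 2)).1 (n + 1)) = (F (n + 2)).1 n := (F (n + 2)).2 n
      rw [h2]
      exact key (n + 2) n (by omega)
    refine ⟨⟨L', hcohL⟩, fun n => ?_⟩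
    rw [SModEq.sub_mem]
    cases n with
    | zero =>
      rw [pow_zero, Ideal.one_eq_top, Submodule.top_smul]
      exact Submodule.mem_top
    | succ j =>
      rw [← hK j, LinearMap.mem_ker, map_sub]
      show (F (j + 1)).1 j - L' j = 0
      rw [sub_eq_zero]

  exact @IsAdicComplete.mk _ _ _ _ _ _ hH hP
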